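/- Let α ∈ (1/2, 1) and choose γ > 0 with 1/2 + 4γ < α. Let ψ be a finite linear combination of indicators of bounded intervals and ψ̂ its Fourier transform. Then ∫_{ℝ⁴} |ψ̂(z + w)| |ψ̂(z′ + w′)| · h_γ(z, z′)² · (1/(1 + |z + w|^γ)) (1/(1 + |z′ + w′|^γ)) dz dz′ dw dw′ < ∞, where h_γ(z, z′) = (1 + |z + z′|^{1/2+γ})^{−1} ((1 + |z|^{1/2+γ})^{−1} + (1 + |z′|^{1/2+γ})^{−1}). -/

import Mathlib

open MeasureTheory

/-- the auxiliary function `h_γ`. -/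
noncomputable def hgamma (γ z z' : ℝ) : ℝ :=
  (1 / (1 + |z + z'| ^ ((1:ℝ)/2 + γ))) *
    (1 / (1 + |z| ^ ((1:ℝ)/2 + γ)) + 1 / (1 + |z'| ^ ((1:ℝ)/2 + γ)))

section AuxLemmas

lemma aux_pos (t r : ℝ) : 0 < 1 + |t| ^ r := by positivity

lemma aux1 {r : ℝ} (hr : 0 < r) (t : ℝ) : (1 + |t|) ^ r ≤ 2 ^ r * (1 + |t| ^ r) := by
  rcases le_or_gt (|t|) 1 with h | h
  · calc (1 + |t|) ^ r ≤ 2 ^ r := by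
          apply Real.rpow_le_rpow (by positivity) (by linarith) hr.le
       _ ≤ 2 ^ r * (1 + |t| ^ r) := by
          nlinarith [Real.rpow_pos_of_pos (show (0:ℝ) < 2 by norm_num) r,
            Real.rpow_nonneg (abs_nonneg t) r]
  · calc (1 + |t|) ^ r ≤ (2 * |t|) ^ r := by
          apply Real.rpow_le_rpow (by positivity) (by linarith) hr.le
       _ = 2 ^ r * |t| ^ r := by
          rw [Real.mul_rpow (by norm_num) (abs_nonneg t)]
       _ ≤ 2 ^ r * (1 + |t| ^ r) := by
          nlinarith [Real.rpow_pos_of_pos (show (0:ℝ) < 2 by norm_num) r,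
            Real.rpow_nonneg (abs_nonneg t) r]

lemma aux2 {r : ℝ} (hr : 0 < r) (t : ℝ) : 1 / (1 + |t| ^ r) ≤ 2 ^ r * (1 + |t|) ^ (-r) := by
  have h1 : (0:ℝ) < (1 + |t|) ^ r := Real.rpow_pos_of_pos (by positivity) r
  have h2 : 1 / (1 + |t| ^ r) ≤ 2 ^ r / (1 + |t|) ^ r := by
    rw [div_le_div_iff₀ (aux_pos t r) h1]
    nlinarith [aux1 hr t]
  rw [Real.rpow_neg (by positivity : (0:ℝ) ≤ 1 + |t|)]
  calc 1 / (1 + |t| ^ r) ≤ 2 ^ r / (1 + |t|) ^ r := h2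
    _ = 2 ^ r * ((1 + |t|) ^ r)⁻¹ := by rw [div_eq_mul_inv]

lemma aux3 {r : ℝ} (hr : 1 < r) : Integrable (fun t : ℝ => (1 + |t|) ^ (-r)) := by
  have := integrable_one_add_norm (E := ℝ) (r := r) (μ := volume) (by simpa using hr)
  simpa [Real.norm_eq_abs] using this

lemma norm_exp_I_mul (x z : ℝ) : ‖Complex.exp (Complex.I * x * z)‖ = 1 := by
  rw [Complex.norm_exp]
  have : (Complex.I * x * z).re = 0 := by
    simp [Complex.mul_re, Complex.mul_im]
  rw [this, Real.exp_zero]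

lemma psihat_repr (m : ℕ) (a p q : Fin m → ℝ) (ψ : ℝ → ℝ)
    (hψ : ∀ x : ℝ, ψ x = ∑ j, a j * Set.indicator (Set.Ioc (p j) (q j)) (fun _ => (1:ℝ)) x)
    (ψhat : ℝ → ℂ)
    (hψhat : ∀ x : ℝ, ψhat x = ∫ z : ℝ, Complex.exp (Complex.I * x * z) * (ψ z : ℂ))
    (x : ℝ) :
    ψhat x = ∑ j, (a j : ℂ) * ∫ z in Set.Ioc (p j) (q j), Complex.exp (Complex.I * x * z) := by
  rw [hψhat]
  have h1 : (fun z : ℝ => Complex.exp (Complex.I * x * z) * (ψ z : ℂ))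
      = fun z => ∑ j, Set.indicator (Set.Ioc (p j) (q j))
          (fun z => (a j : ℂ) * Complex.exp (Complex.I * x * z)) z := by
    funext z
    rw [hψ z]
    push_cast
    rw [Finset.mul_sum]
    refine Finset.sum_congr rfl fun j _ => ?_
    by_cases hz : z ∈ Set.Ioc (p j) (q j)
    · simp only [Set.indicator_of_mem hz, Complex.ofReal_one]
      ring
    · simp [Set.indicator_of_notMem hz]
  rw [h1, integral_finset_sum]
  · refine Finset.sum_congr rfl fun j _ => ?_
    rw [integral_indicator measurableSet_Ioc, integral_const_mul]
  · intro j _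
    rw [integrable_indicator_iff measurableSet_Ioc]
    apply Measure.integrableOn_of_bounded (M := ‖(a j : ℂ)‖) measure_Ioc_lt_top.ne
    · apply Measurable.aestronglyMeasurable
      apply Measurable.const_mul
      apply Complex.measurable_exp.comp
      fun_prop
    · filter_upwards with z
      rw [norm_mul, norm_exp_I_mul, mul_one]

lemma psihat_decay (m : ℕ) (a p q : Fin m → ℝ) (ψ : ℝ → ℝ)
    (hψ : ∀ x : ℝ, ψ x = ∑ j, a j * Set.indicator (Set.Ioc (p j) (q j)) (fun _ => (1:ℝ)) x)
    (ψhat : ℝ → ℂ)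
    (hψhat : ∀ x : ℝ, ψhat x = ∫ z : ℝ, Complex.exp (Complex.I * x * z) * (ψ z : ℂ)) :
    ∃ C : ℝ, 0 ≤ C ∧ ∀ x : ℝ, ‖ψhat x‖ ≤ C / (1 + |x|) := by
  set C₁ : ℝ := ∑ j, |a j| * |q j - p j| with hC₁
  set C₂ : ℝ := ∑ j, |a j| * 2 with hC₂
  have hC₁0 : 0 ≤ C₁ := Finset.sum_nonneg fun j _ => by positivity
  have hC₂0 : 0 ≤ C₂ := Finset.sum_nonneg fun j _ => by positivity
  refine ⟨C₁ + C₂, by linarith, fun x => ?_⟩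
  have hb1 : ‖ψhat x‖ ≤ C₁ := by
    rw [psihat_repr m a p q ψ hψ ψhat hψhat x]
    refine (norm_sum_le _ _).trans ?_
    refine Finset.sum_le_sum fun j _ => ?_
    rw [norm_mul, Complex.norm_real, Real.norm_eq_abs]
    refine mul_le_mul_of_nonneg_left ?_ (abs_nonneg _)
    refine (norm_setIntegral_le_of_norm_le_const (C := 1) measure_Ioc_lt_top
      (fun z _ => le_of_eq (norm_exp_I_mul x z))).trans ?_
    · rw [one_mul, Real.volume_real_Ioc]
      exact max_le (le_abs_self _) (abs_nonneg _)
  have hb2 : ‖ψhat x‖ * |x| ≤ C₂ := by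
    rcases eq_or_ne x 0 with rfl | hx
    · simpa using hC₂0
    · have hI : ∀ j : Fin m,
          ‖∫ z in Set.Ioc (p j) (q j), Complex.exp (Complex.I * x * z)‖ ≤ 2 / |x| := by
        intro j
        rcases le_or_gt (q j) (p j) with h | h
        · rw [Set.Ioc_eq_empty (by exact not_lt.mpr h)]
          rw [Measure.restrict_empty, integral_zero_measure, norm_zero]
          positivity
        · have heq : (∫ z in Set.Ioc (p j) (q j), Complex.exp (Complex.I * x * z))
              = ∫ z in (p j)..(q j), Complex.exp ((Complex.I * x) * z) := by
            rw [intervalIntegral.integral_of_le h.le]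
          rw [heq, integral_exp_mul_complex (by
            exact mul_ne_zero Complex.I_ne_zero (by exact_mod_cast hx))]
          rw [norm_div]
          have hden : ‖Complex.I * (x:ℂ)‖ = |x| := by
            rw [norm_mul, Complex.norm_I, one_mul, Complex.norm_real, Real.norm_eq_abs]
          rw [hden]
          gcongr
          refine (norm_sub_le _ _).trans ?_
          rw [norm_exp_I_mul, norm_exp_I_mul]; norm_num
      calc ‖ψhat x‖ * |x| ≤ (∑ j, |a j| * (2/|x|)) * |x| := by
            apply mul_le_mul_of_nonneg_right ?_ (abs_nonneg x)
            rw [psihat_repr m a p q ψ hψ ψhat hψhat x]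
            refine (norm_sum_le _ _).trans (Finset.sum_le_sum fun j _ => ?_)
            rw [norm_mul, Complex.norm_real, Real.norm_eq_abs]
            exact mul_le_mul_of_nonneg_left (hI j) (abs_nonneg _)
          _ = C₂ := by
            rw [Finset.sum_mul]
            refine Finset.sum_congr rfl fun j _ => ?_
            rw [mul_assoc, div_mul_cancel₀ _ (abs_ne_zero.mpr hx)]
  have hpos : (0:ℝ) < 1 + |x| := by positivity
  rw [le_div_iff₀ hpos]
  calc ‖ψhat x‖ * (1 + |x|) = ‖ψhat x‖ + ‖ψhat x‖ * |x| := by ring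
    _ ≤ C₁ + C₂ := add_le_add hb1 hb2

-- measure preserving maps on ℝ⁴
lemma mp_inner (z z' : ℝ) :
    MeasurePreserving (fun r : ℝ × ℝ => (z + r.1, z' + r.2)) volume volume := by
  rw [Measure.volume_eq_prod]
  exact (measurePreserving_add_left volume z).prod (measurePreserving_add_left volume z')

lemma mp_S (z : ℝ) :
    MeasurePreserving (fun r : ℝ × ℝ × ℝ => (r.1, z + r.2.1, r.1 + r.2.2)) volume volume := by
  rw [Measure.volume_eq_prod]
  exact (MeasurePreserving.id volume).skew_product (by fun_prop)
    (Filter.Eventually.of_forall fun z' => (mp_inner z z').map_eq)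

lemma mp_T : MeasurePreserving
    (fun v : ℝ × ℝ × ℝ × ℝ => (v.1, v.2.1, v.1 + v.2.2.1, v.2.1 + v.2.2.2)) volume volume := by
  rw [Measure.volume_eq_prod]
  exact (MeasurePreserving.id volume).skew_product (by fun_prop)
    (Filter.Eventually.of_forall fun z => (mp_S z).map_eq)

lemma mp_W (z : ℝ) :
    MeasurePreserving (fun r : ℝ × ℝ × ℝ => (z + r.1, r.2)) volume volume := by
  rw [Measure.volume_eq_prod]
  exact (measurePreserving_add_left volume z).prod (MeasurePreserving.id volume)

lemma mp_T1 : MeasurePreserving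
    (fun v : ℝ × ℝ × ℝ × ℝ => (v.1, v.1 + v.2.1, v.2.2)) volume volume := by
  rw [Measure.volume_eq_prod]
  exact (MeasurePreserving.id volume).skew_product (by fun_prop)
    (Filter.Eventually.of_forall fun z => (mp_W z).map_eq)

lemma mp_P : MeasurePreserving
    (fun v : ℝ × ℝ × ℝ × ℝ => (v.2.1, v.1, v.2.2)) volume volume := by
  have h1 : MeasurePreserving
      (MeasurableEquiv.prodAssoc : (ℝ × ℝ) × (ℝ × ℝ) ≃ᵐ ℝ × ℝ × ℝ × ℝ) volume volume :=
    volume_preserving_prodAssoc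
  have h2 : MeasurePreserving (Prod.map (Prod.swap : ℝ × ℝ → ℝ × ℝ) (id : ℝ × ℝ → ℝ × ℝ))
      volume volume := by
    rw [Measure.volume_eq_prod]
    refine MeasurePreserving.prod ?_ (MeasurePreserving.id volume)
    rw [Measure.volume_eq_prod]
    exact Measure.measurePreserving_swap
  have h3 := (h1.comp h2).comp (MeasurePreserving.symm _ h1)
  exact h3

lemma integrable_prod4 {F G : ℝ → ℝ} (hF : Integrable F volume) (hG : Integrable G volume) :
    Integrable (fun v : ℝ × ℝ × ℝ × ℝ => G v.1 * (G v.2.1 * (F v.2.2.1 * F v.2.2.2)))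
      volume := by
  have h2 : Integrable (fun r : ℝ × ℝ => F r.1 * F r.2) volume := by
    rw [Measure.volume_eq_prod]; exact hF.mul_prod hF
  have h1 : Integrable (fun r : ℝ × ℝ × ℝ => G r.1 * (F r.2.1 * F r.2.2)) volume := by
    rw [Measure.volume_eq_prod]; exact hG.mul_prod h2
  rw [Measure.volume_eq_prod]; exact hG.mul_prod h1

end AuxLemmas

/-- integrability over `ℝ⁴` of
`|ψ̂(z+w)||ψ̂(z′+w′)| h_γ(z,z′)² (1+|z+w|^γ)⁻¹(1+|z′+w′|^γ)⁻¹`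
for a step function `ψ`. -/
theorem stmt15 (α γ : ℝ) (hα : α ∈ Set.Ioo (1/2 : ℝ) 1) (hγ : 0 < γ)
    (hγα : 1/2 + 4 * γ < α)
    (m : ℕ) (a p q : Fin m → ℝ) (ψ : ℝ → ℝ)
    (hψ : ∀ x : ℝ, ψ x = ∑ j, a j * Set.indicator (Set.Ioc (p j) (q j)) (fun _ => (1:ℝ)) x)
    (ψhat : ℝ → ℂ)
    (hψhat : ∀ x : ℝ, ψhat x = ∫ z : ℝ, Complex.exp (Complex.I * x * z) * (ψ z : ℂ)) :
    Integrable (fun v : ℝ × ℝ × ℝ × ℝ =>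
      ‖ψhat (v.1 + v.2.2.1)‖ * ‖ψhat (v.2.1 + v.2.2.2)‖ *
        hgamma γ v.1 v.2.1 ^ 2 *
        (1 / (1 + |v.1 + v.2.2.1| ^ γ)) * (1 / (1 + |v.2.1 + v.2.2.2| ^ γ)))
      volume := by
  obtain ⟨C, hC0, hCb⟩ := psihat_decay m a p q ψ hψ ψhat hψhat
  have hγ1 : γ < 1 := by nlinarith [hα.2]
  have hs0 : (0:ℝ) < 1/2 + γ := by linarith
  -- measurability of ψhat
  have hψm : Measurable ψ := by
    have h : ψ = fun x => ∑ j, a j * Set.indicator (Set.Ioc (p j) (q j)) (fun _ => (1:ℝ)) x :=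
      funext hψ
    rw [h]
    exact Finset.measurable_sum _ fun j _ =>
      ((measurable_const.indicator measurableSet_Ioc).const_mul _)
  have hψhatM : Measurable ψhat := by
    have h : ψhat = fun x : ℝ => ∫ z : ℝ, Complex.exp (Complex.I * x * z) * (ψ z : ℂ) :=
      funext hψhat
    rw [h]
    apply StronglyMeasurable.measurable
    apply MeasureTheory.StronglyMeasurable.integral_prod_right'
      (f := fun p : ℝ × ℝ => Complex.exp (Complex.I * p.1 * p.2) * (ψ p.2 : ℂ))
    apply Measurable.stronglyMeasurable
    apply Measurable.mul
    · exact Complex.measurable_exp.comp (by fun_prop)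
    · exact Complex.measurable_ofReal.comp (hψm.comp measurable_snd)
  -- auxiliary one-dimensional functions
  set F : ℝ → ℝ := fun x => ‖ψhat x‖ * (1 / (1 + |x| ^ γ)) with hFdef
  set G : ℝ → ℝ := fun t => (1 / (1 + |t| ^ ((1:ℝ)/2 + γ))) ^ 2 with hGdef
  have hcCont : ∀ r : ℝ, 0 < r → Continuous (fun t : ℝ => 1 / (1 + |t| ^ r)) := by
    intro r hr
    apply Continuous.div continuous_const
    · exact continuous_const.add (continuous_abs.rpow_const fun x => Or.inr hr.le)
    · exact fun t => (aux_pos t r).ne'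
  have hFm : Measurable F := by
    exact hψhatM.norm.mul (hcCont γ hγ).measurable
  have hGm : Measurable G := ((hcCont _ hs0).pow 2).measurable
  have hFnn : ∀ x, 0 ≤ F x := fun x => by
    have := aux_pos x γ; positivity
  have hGnn : ∀ t, 0 ≤ G t := fun t => sq_nonneg _
  have hFi : Integrable F := by
    apply Integrable.mono' ((aux3 (r := 1 + γ) (by linarith)).const_mul (C * 2 ^ γ))
      hFm.aestronglyMeasurable
    filter_upwards with x
    rw [Real.norm_eq_abs, abs_of_nonneg (hFnn x)]
    have h1 : F x ≤ (C / (1 + |x|)) * (2 ^ γ * (1 + |x|) ^ (-γ)) := by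
      apply mul_le_mul (hCb x) (aux2 hγ x) (by positivity) (by positivity)
    refine h1.trans (le_of_eq ?_)
    have hpos : (0:ℝ) < 1 + |x| := by positivity
    rw [div_eq_mul_inv, ← Real.rpow_neg_one (1 + |x|)]
    rw [show C * (1 + |x|) ^ (-1:ℝ) * (2 ^ γ * (1 + |x|) ^ (-γ))
        = C * 2 ^ γ * ((1 + |x|) ^ (-1:ℝ) * (1 + |x|) ^ (-γ)) by ring]
    rw [← Real.rpow_add hpos, show (-1 + -γ : ℝ) = -(1 + γ) by ring]
  have hGi : Integrable G := by
    apply Integrable.mono'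
      ((aux3 (r := 2 * (1/2 + γ)) (by linarith)).const_mul ((2 ^ ((1:ℝ)/2 + γ)) ^ 2))
      hGm.aestronglyMeasurable
    filter_upwards with t
    rw [Real.norm_eq_abs, abs_of_nonneg (hGnn t)]
    have h1 : G t ≤ (2 ^ ((1:ℝ)/2 + γ) * (1 + |t|) ^ (-(1/2 + γ))) ^ 2 := by
      apply pow_le_pow_left₀ (by positivity) (aux2 hs0 t)
    refine h1.trans (le_of_eq ?_)
    have hpos : (0:ℝ) < 1 + |t| := by positivity
    rw [mul_pow, sq ((1 + |t|) ^ (-(1/2 + γ))), ← Real.rpow_add hpos]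
    ring_nf
  -- the pieces of the dominating function
  have hbase := integrable_prod4 hFi hGi
  have hg1 : Integrable
      (fun v : ℝ × ℝ × ℝ × ℝ => G v.1 * (G (v.1 + v.2.1) * (F v.2.2.1 * F v.2.2.2)))
      volume :=
    (mp_T1.integrable_comp hbase.aestronglyMeasurable).2 hbase
  have hg2 : Integrable
      (fun v : ℝ × ℝ × ℝ × ℝ => G v.2.1 * (G (v.2.1 + v.1) * (F v.2.2.1 * F v.2.2.2)))
      volume :=
    (mp_P.integrable_comp hg1.aestronglyMeasurable).2 hg1
  -- the function before the shear
  set g : ℝ × ℝ × ℝ × ℝ → ℝ :=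
    fun v => hgamma γ v.1 v.2.1 ^ 2 * (F v.2.2.1 * F v.2.2.2) with hgdef
  have hhm : Continuous (fun zz : ℝ × ℝ => hgamma γ zz.1 zz.2) := by
    unfold hgamma
    apply Continuous.mul
    · exact (hcCont _ hs0).comp (continuous_fst.add continuous_snd)
    · exact ((hcCont _ hs0).comp continuous_fst).add ((hcCont _ hs0).comp continuous_snd)
  have hgm : AEStronglyMeasurable g volume := by
    apply Measurable.aestronglyMeasurable
    apply Measurable.mul
    · exact ((hhm.comp (by fun_prop : Continuous fun v : ℝ × ℝ × ℝ × ℝ =>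
        (v.1, v.2.1))).measurable).pow measurable_const
    · exact (hFm.comp (measurable_fst.comp (measurable_snd.comp measurable_snd))).mul
        (hFm.comp (measurable_snd.comp (measurable_snd.comp measurable_snd)))
  have hgi : Integrable g volume := by
    apply Integrable.mono' ((hg1.add hg2).const_mul 2) hgm
    filter_upwards with v
    obtain ⟨z, z', u, u'⟩ := v
    have hgnn : 0 ≤ hgamma γ z z' ^ 2 * (F u * F u') := by
      have := hFnn u; have := hFnn u'; positivity
    rw [Real.norm_eq_abs, abs_of_nonneg hgnn]
    have hGsymm : G (z' + z) = G (z + z') := by rw [add_comm]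
    have key : hgamma γ z z' ^ 2 ≤ 2 * (G z * G (z + z') + G z' * G (z + z')) := by
      unfold hgamma
      rw [hGdef]
      set A := 1 / (1 + |z + z'| ^ ((1:ℝ)/2 + γ)) with hA
      set B := 1 / (1 + |z| ^ ((1:ℝ)/2 + γ)) with hB
      set B' := 1 / (1 + |z'| ^ ((1:ℝ)/2 + γ)) with hB'
      have hAnn : 0 ≤ A := by rw [hA]; positivity
      have hBnn : 0 ≤ B := by rw [hB]; positivity
      have hB'nn : 0 ≤ B' := by rw [hB']; positivity
      nlinarith [sq_nonneg (B - B'), sq_nonneg (A * (B - B')), sq_nonneg (A*B), sq_nonneg (A*B')]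
    calc hgamma γ z z' ^ 2 * (F u * F u')
        ≤ (2 * (G z * G (z + z') + G z' * G (z + z'))) * (F u * F u') := by
          apply mul_le_mul_of_nonneg_right key (by have := hFnn u; have := hFnn u'; positivity)
      _ = 2 * (G z * (G (z + z') * (F u * F u')) + G z' * (G (z' + z) * (F u * F u'))) := by
          rw [hGsymm]; ring
  -- conclude by the shear `T`
  have hmain := (mp_T.integrable_comp hgm).2 hgi
  refine hmain.congr (Filter.Eventually.of_forall fun v => ?_)
  show g (v.1, v.2.1, v.1 + v.2.2.1, v.2.1 + v.2.2.2) = _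
  rw [hgdef, hFdef]
  ring
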